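/- If x, y are elements of a complex Lie algebra with [x,y] = λy, λ ∈ ℂ, then for constants a₀, b₀ > 0 the time-dependent Hermitian tensor f(t) = a₀ x⊗x̄ + b₀ e^{|λ|² a₀ t} y⊗ȳ solves the ODE ∂_t f = f#. -/

import Mathlib

open scoped BigOperators ComplexConjugate

/-- The coordinate form of the `#` operation on `Sym^{1,1}(g)` for a complex Lie algebra
`g` (Hermitian elements of `g ⊗ ḡ` being recorded by their coefficient matrices `h^{αβ}`
in a chosen basis): `(h#k)^{αβ} = c^α_{εδ} conj(c^β_{γθ}) h^{εγ} k^{δθ}`, where `c` are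
the structure constants.  On pure tensors this is
`(v₁ ⊗ v̄₂) # (w₁ ⊗ w̄₂) = ⁅v₁, w₁⁆ ⊗ conj ⁅v₂, w₂⁆`. -/
noncomputable def sharpMatC {ι : Type*} [Fintype ι] (c : ι → ι → ι → ℂ) (h k : ι → ι → ℂ) : ι → ι → ℂ :=
  fun α β => ∑ ε, ∑ δ, ∑ γ, ∑ θ, c ε δ α * conj (c γ θ β) * h ε γ * k δ θ

/-- The quadratic square `h# = (1/2) h # h`. -/
noncomputable def sharpSqC {ι : Type*} [Fintype ι] (c : ι → ι → ι → ℂ) (h : ι → ι → ℂ) :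
    ι → ι → ℂ :=
  fun α β => (1 / 2 : ℂ) * sharpMatC c h h α β

/-- Evaluation of a Hermitian form `h ∈ Sym^{1,1}(g)` on a functional `ξ ∈ g*`
(given by coordinates): `h(ξ, ξ̄) = Σ ξ_α conj(ξ_β) h^{αβ}`. -/
noncomputable def quadC {ι : Type*} [Fintype ι] (h : ι → ι → ℂ) (ξ : ι → ℂ) : ℂ :=
  ∑ α, ∑ β, ξ α * conj (ξ β) * h α β

/-- A coefficient matrix is Hermitian. -/
def HermMatC {ι : Type*} (h : ι → ι → ℂ) : Prop := ∀ α β, h α β = conj (h β α)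

/-- Positive semidefiniteness of a Hermitian form on `g*`. -/
def PosSemidefC {ι : Type*} [Fintype ι] (h : ι → ι → ℂ) : Prop :=
  ∀ ξ : ι → ℂ, 0 ≤ (quadC h ξ).re

/-- Positive definiteness of a Hermitian form on `g*`. -/
def PosDefC {ι : Type*} [Fintype ι] (h : ι → ι → ℂ) : Prop :=
  ∀ ξ : ι → ℂ, ξ ≠ 0 → 0 < (quadC h ξ).re

/-- Structure constants of a complex Lie algebra relative to a basis. -/
noncomputable def structConstC {ι : Type*} [Fintype ι] (L : Type*) [LieRing L] [LieAlgebra ℂ L]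
    (b : Module.Basis ι ℂ L) : ι → ι → ι → ℂ :=
  fun i j k => b.repr ⁅b i, b j⁆ k

private noncomputable def lieLeftAux (L : Type*) [LieRing L] [LieAlgebra ℂ L] (w : L) : L →ₗ[ℂ] L where
  toFun v := ⁅v, w⁆
  map_add' a b := add_lie a b w
  map_smul' c a := smul_lie c a w

private noncomputable def lieRightAux (L : Type*) [LieRing L] [LieAlgebra ℂ L] (v : L) : L →ₗ[ℂ] L where
  toFun w := ⁅v, w⁆
  map_add' a b := lie_add v a b
  map_smul' c a := lie_smul c v a

lemma bracket_repr' {ι : Type*} [Fintype ι] (L : Type*) [LieRing L] [LieAlgebra ℂ L]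
    (b : Module.Basis ι ℂ L) (v w : L) (α : ι) :
    ∑ ε, ∑ δ, structConstC L b ε δ α * b.repr v ε * b.repr w δ = b.repr ⁅v, w⁆ α := by
  conv_rhs => rw [← b.sum_repr v, ← b.sum_repr w]
  have h1 : ⁅∑ i, b.repr v i • b i, ∑ i, b.repr w i • b i⁆
      = ∑ ε, ∑ δ, (b.repr v ε * b.repr w δ) • ⁅b ε, b δ⁆ := by
    rw [show ⁅∑ i, b.repr v i • b i, ∑ i, b.repr w i • b i⁆
        = lieLeftAux L (∑ i, b.repr w i • b i) (∑ i, b.repr v i • b i) from rfl,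
      map_sum]
    refine Finset.sum_congr rfl fun ε _ => ?_
    simp only [map_smul, lieLeftAux, LinearMap.coe_mk, AddHom.coe_mk]
    rw [show ⁅b ε, ∑ i, b.repr w i • b i⁆ = lieRightAux L (b ε) (∑ i, b.repr w i • b i) from rfl,
      map_sum, Finset.smul_sum]
    refine Finset.sum_congr rfl fun δ _ => ?_
    simp only [map_smul, lieRightAux, LinearMap.coe_mk, AddHom.coe_mk, smul_smul, mul_comm]
  rw [h1]
  simp only [map_sum, map_smul, Finsupp.coe_finset_sum, Finsupp.coe_smul, Finset.sum_apply,
    Pi.smul_apply, smul_eq_mul, structConstC]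
  refine Finset.sum_congr rfl fun ε _ => Finset.sum_congr rfl fun δ _ => ?_
  ring

lemma swap4' {ι : Type*} [Fintype ι] (g : ι → ι → ι → ι → ℂ) :
    (∑ ε, ∑ δ, ∑ γ, ∑ θ, g ε δ γ θ) = ∑ γ, ∑ θ, ∑ ε, ∑ δ, g ε δ γ θ := by
  have h1 : (∑ ε, ∑ δ, ∑ γ, ∑ θ, g ε δ γ θ) = ∑ ε, ∑ γ, ∑ δ, ∑ θ, g ε δ γ θ :=
    Finset.sum_congr rfl fun ε _ => Finset.sum_comm
  have h2 : (∑ ε, ∑ γ, ∑ δ, ∑ θ, g ε δ γ θ) = ∑ γ, ∑ ε, ∑ δ, ∑ θ, g ε δ γ θ :=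
    Finset.sum_comm
  have h3 : ∀ γ, (∑ ε, ∑ δ, ∑ θ, g ε δ γ θ) = ∑ θ, ∑ ε, ∑ δ, g ε δ γ θ := fun γ => by
    have := Finset.sum_congr rfl fun ε (_ : ε ∈ (Finset.univ : Finset ι)) =>
      (Finset.sum_comm : (∑ δ, ∑ θ, g ε δ γ θ) = ∑ θ, ∑ δ, g ε δ γ θ)
    rw [this, Finset.sum_comm]
  rw [h1, h2]
  exact Finset.sum_congr rfl fun γ _ => h3 γ

lemma factor4' {ι : Type*} [Fintype ι] (c : ι → ι → ι → ℂ) (V W V' W' : ι → ℂ) (α β : ι) :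
    (∑ ε, ∑ δ, ∑ γ, ∑ θ, c ε δ α * conj (c γ θ β) * (V ε * conj (V' γ)) * (W δ * conj (W' θ)))
    = (∑ ε, ∑ δ, c ε δ α * V ε * W δ) * conj (∑ γ, ∑ θ, c γ θ β * V' γ * W' θ) := by
  rw [swap4']
  simp only [map_sum, map_mul, Finset.sum_mul, Finset.mul_sum]
  refine Finset.sum_congr rfl fun ε _ => Finset.sum_congr rfl fun δ _ =>
    Finset.sum_congr rfl fun γ _ => Finset.sum_congr rfl fun θ _ => ?_
  ring

/-- The main computation: `sharpSq` of the explicit tensor. -/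
lemma sharpSq_value {ι : Type*} [Fintype ι] (L : Type*) [LieRing L] [LieAlgebra ℂ L]
    (b : Module.Basis ι ℂ L) (x y : L) (lam : ℂ) (hxy : ⁅x, y⁆ = lam • y) (A P : ℂ) (α β : ι) :
    sharpSqC (structConstC L b) (fun α β =>
        A * b.repr x α * conj (b.repr x β) + P * b.repr y α * conj (b.repr y β)) α β
      = A * P * (lam * conj lam) * b.repr y α * conj (b.repr y β) := by
  set c := structConstC L b
  set X : ι → ℂ := fun α => b.repr x α
  set Y : ι → ℂ := fun α => b.repr y α
  have brk : ∀ v w : L, (∑ ε, ∑ δ, c ε δ α * b.repr v ε * b.repr w δ) = b.repr ⁅v, w⁆ α :=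
    fun v w => bracket_repr' L b v w α
  have brkβ : ∀ v w : L, (∑ γ, ∑ θ, c γ θ β * b.repr v γ * b.repr w θ) = b.repr ⁅v, w⁆ β :=
    fun v w => bracket_repr' L b v w β
  have hmat : sharpMatC c (fun α β => A * X α * conj (X β) + P * Y α * conj (Y β)) 
      (fun α β => A * X α * conj (X β) + P * Y α * conj (Y β)) α β
      = A * A * (b.repr ⁅x,x⁆ α * conj (b.repr ⁅x,x⁆ β))
      + A * P * (b.repr ⁅x,y⁆ α * conj (b.repr ⁅x,y⁆ β))
      + P * A * (b.repr ⁅y,x⁆ α * conj (b.repr ⁅y,x⁆ β))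
      + P * P * (b.repr ⁅y,y⁆ α * conj (b.repr ⁅y,y⁆ β)) := by
    unfold sharpMatC
    have expand : ∀ ε δ γ θ : ι,
        c ε δ α * conj (c γ θ β) * (A * X ε * conj (X γ) + P * Y ε * conj (Y γ))
          * (A * X δ * conj (X θ) + P * Y δ * conj (Y θ))
        = A * A * (c ε δ α * conj (c γ θ β) * (X ε * conj (X γ)) * (X δ * conj (X θ)))
        + A * P * (c ε δ α * conj (c γ θ β) * (X ε * conj (X γ)) * (Y δ * conj (Y θ)))
        + P * A * (c ε δ α * conj (c γ θ β) * (Y ε * conj (Y γ)) * (X δ * conj (X θ)))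
        + P * P * (c ε δ α * conj (c γ θ β) * (Y ε * conj (Y γ)) * (Y δ * conj (Y θ))) := by
      intro ε δ γ θ; ring
    simp only [expand, Finset.sum_add_distrib, ← Finset.mul_sum]
    rw [factor4' c X X X X α β, factor4' c X Y X Y α β, factor4' c Y X Y X α β,
      factor4' c Y Y Y Y α β]
    simp only [X, Y]
    rw [brk x x, brk x y, brk y x, brk y y, brkβ x x, brkβ x y, brkβ y x, brkβ y y]
  unfold sharpSqC
  rw [hmat, lie_self, lie_self, hxy, show ⁅y, x⁆ = -(lam • y) by rw [← lie_skew, hxy]]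
  simp only [map_zero, map_smul, map_neg, Finsupp.coe_smul, Finsupp.coe_neg, Pi.smul_apply,
    Pi.neg_apply, smul_eq_mul, map_mul, Finsupp.zero_apply, zero_mul, mul_zero]
  ring

/-- if `x, y` are elements of a complex Lie algebra with `⁅x, y⁆ = λ y`,
then for constants `a₀, b₀ > 0` the time-dependent Hermitian tensor
`f(t) = a₀ x ⊗ x̄ + b₀ e^{|λ|² a₀ t} y ⊗ ȳ` (written in coordinates with respect to a
basis `b`) solves the ODE `∂ₜ f = f#`. -/
theorem explicit_subsolution_solves_ODE {ι : Type*} [Fintype ι] (L : Type*)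
    [LieRing L] [LieAlgebra ℂ L] (b : Module.Basis ι ℂ L)
    (x y : L) (lam : ℂ) (hxy : ⁅x, y⁆ = lam • y)
    (a₀ b₀ : ℝ) (ha₀ : 0 < a₀) (hb₀ : 0 < b₀) :
    ∀ t : ℝ, HasDerivAt
      (fun s : ℝ => (fun α β =>
        (a₀ : ℂ) * b.repr x α * conj (b.repr x β) +
          (b₀ : ℂ) * Real.exp (‖lam‖ ^ 2 * a₀ * s) *
            b.repr y α * conj (b.repr y β) : ι → ι → ℂ))
      (sharpSqC (structConstC L b) (fun α β =>
        (a₀ : ℂ) * b.repr x α * conj (b.repr x β) +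
          (b₀ : ℂ) * Real.exp (‖lam‖ ^ 2 * a₀ * t) *
            b.repr y α * conj (b.repr y β)))
      t := by
  intro t
  set k : ℝ := ‖lam‖ ^ 2 * a₀ with hk
  refine hasDerivAt_pi.2 fun α => hasDerivAt_pi.2 fun β => ?_
  have habs : ((‖lam‖ ^ 2 : ℝ) : ℂ) = lam * conj lam := by
    rw [Complex.mul_conj, Complex.normSq_eq_norm_sq]
  have h1 : HasDerivAt (fun s : ℝ => k * s) (k * 1) t := (hasDerivAt_id t).const_mul k
  have h3 := h1.exp.ofReal_comp
  have h4 := ((((h3.const_mul ((b₀ : ℝ) : ℂ)).mul_const (b.repr y α)).mul_const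
      (conj (b.repr y β))).const_add ((a₀ : ℂ) * b.repr x α * conj (b.repr x β)))
  refine h4.congr_deriv ?_
  rw [sharpSq_value L b x y lam hxy ((a₀ : ℝ) : ℂ)
      (((b₀ : ℝ) : ℂ) * Real.exp (‖lam‖ ^ 2 * a₀ * t)) α β]
  rw [hk]
  push_cast [habs]
  ring
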